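/- Adaptive SR e-detectors are valid e-detectors: let {ω_k}_{k≥1} be nonnegative weights, K : ℕ → ℕ a nondecreasing scheduling function with generalized inverse K⁻¹(k) := inf{j ≥ 1 : K(j) ≥ k}, γ_j := 1/Σ_{k=1}^{K(j)} ω_k ≥ 1 assumed finite, and for each k let Λ^(j)(k) be e_j-processes built from baseline increments L(k). Then M^aSR_n := Σ_{k=1}^{K(n)} ω_k Σ_{j=K⁻¹(k)}^n γ_j Π_{i=j}^n L_i(k) satisfies E[M^aSR_τ] ≤ E[τ] for all stopping times τ. -/

import Mathlib

open MeasureTheory Filter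
open scoped ENNReal

noncomputable section

/-- A stopping time (possibly infinite, valued in `ℕ∞`) with respect to a filtration. -/
def IsStoppingTimeENat {Ω : Type*} {m0 : MeasurableSpace Ω}
    (𝒢 : Filtration ℕ m0) (τ : Ω → ℕ∞) : Prop :=
  ∀ n : ℕ, MeasurableSet[𝒢 n] {ω | τ ω ≤ (n : ℕ∞)}

/-- The value of a process at a stopping time, with `limsup` at infinity. -/
def stoppedVal {Ω : Type*} (M : ℕ → Ω → ℝ≥0∞) (τ : Ω → ℕ∞) (ω : Ω) : ℝ≥0∞ :=
  if τ ω = ⊤ then limsup (fun n => M n ω) atTop else M (τ ω).toNat ω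

/-- An e-detector: a nonnegative adapted process with `E[M_τ] ≤ E[τ]` for all stopping times. -/
def IsEDetector {Ω : Type*} {m0 : MeasurableSpace Ω}
    (𝒢 : Filtration ℕ m0) (μ : Measure Ω) (M : ℕ → Ω → ℝ≥0∞) : Prop :=
  (∀ n, Measurable[𝒢 n] (M n)) ∧
  ∀ τ : Ω → ℕ∞, IsStoppingTimeENat 𝒢 τ →
    ∫⁻ ω, stoppedVal M τ ω ∂μ ≤ ∫⁻ ω, (τ ω : ℝ≥0∞) ∂μ

/-! ### Auxiliary lemmas -/

lemma enat_le_iff_pred_lt (j : ℕ) (hj : 1 ≤ j) (a : ℕ∞) :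
    (j : ℕ∞) ≤ a ↔ ((j - 1 : ℕ) : ℕ∞) < a := by
  have hcast : ((j : ℕ) : ℕ∞) = ((j - 1 : ℕ) : ℕ∞) + 1 := by
    rw [← Nat.cast_add_one, Nat.sub_add_cancel hj]
  rw [hcast, ENat.add_one_le_iff (by simp)]

lemma enat_lt_iff_succ_le (N : ℕ) (a : ℕ∞) :
    (N : ℕ∞) < a ↔ ((N + 1 : ℕ) : ℕ∞) ≤ a := by
  rw [Nat.cast_add_one, ENat.add_one_le_iff (by simp)]

lemma enat_coe_tsum (a : ℕ∞) :
    (a : ℝ≥0∞) = ∑' i : ℕ, if (i : ℕ∞) < a then 1 else 0 := by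
  induction a using ENat.recTopCoe with
  | top =>
    have h1 : ∀ i : ℕ, (if (i : ℕ∞) < ⊤ then (1 : ℝ≥0∞) else 0) = 1 := fun i =>
      if_pos (lt_top_iff_ne_top.mpr (by simp))
    rw [tsum_congr h1, ENNReal.tsum_const_eq_top_of_ne_zero one_ne_zero]
    simp
  | coe m =>
    rw [tsum_eq_sum (s := Finset.range m) (fun i hi => if_neg (by
      simp only [not_lt]
      exact_mod_cast le_of_not_gt (fun h => hi (Finset.mem_range.mpr h))))]
    rw [Finset.sum_congr rfl (fun i hi => if_pos (by exact_mod_cast Finset.mem_range.mp hi)),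
      Finset.sum_const, Finset.card_range, nsmul_eq_mul, mul_one]
    simp

/-- Key conditional-expectation-free bound: if `g` integrates to at most the measure on every
`m`-measurable set, then `∫ f * g ≤ ∫ f` for `m`-measurable `f`. -/
lemma aux_keyMul {Ω : Type*} {m m0 : MeasurableSpace Ω} (hm : m ≤ m0)
    (μ : Measure Ω) {f g : Ω → ℝ≥0∞} (hf : Measurable[m] f) (hg : Measurable g)
    (hgle : ∀ A : Set Ω, MeasurableSet[m] A → ∫⁻ ω in A, g ω ∂μ ≤ μ A) :
    ∫⁻ ω, f ω * g ω ∂μ ≤ ∫⁻ ω, f ω ∂μ := by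
  have hf0 : Measurable f := hf.mono hm le_rfl
  have h1 : ∫⁻ ω, f ω * g ω ∂μ = ∫⁻ ω, f ω ∂(μ.withDensity g) := by
    rw [lintegral_withDensity_eq_lintegral_mul μ hg hf0]
    exact lintegral_congr fun ω => (mul_comm _ _)
  have h2 : (μ.withDensity g).trim hm ≤ μ.trim hm := by
    refine Measure.le_iff.2 fun s hs => ?_
    rw [trim_measurableSet_eq hm hs, trim_measurableSet_eq hm hs,
      withDensity_apply _ (hm s hs)]
    exact hgle s hs
  calc ∫⁻ ω, f ω * g ω ∂μ = ∫⁻ ω, f ω ∂(μ.withDensity g) := h1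
    _ = ∫⁻ ω, f ω ∂((μ.withDensity g).trim hm) := (lintegral_trim hm hf).symm
    _ ≤ ∫⁻ ω, f ω ∂(μ.trim hm) := lintegral_mono' h2 le_rfl
    _ = ∫⁻ ω, f ω ∂μ := lintegral_trim hm hf

/-- The per-epoch summand of the adaptive SR e-detector after interchanging sums. -/
private def ZZ {Ω : Type*} (w : ℕ → ℝ≥0∞) (K : ℕ → ℕ) (L : ℕ → ℕ → Ω → ℝ≥0∞)
    (j n : ℕ) (ω : Ω) : ℝ≥0∞ :=
  ∑ k ∈ Finset.Icc 1 (K j), w k *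
    ((∑ k' ∈ Finset.Icc 1 (K j), w k')⁻¹ * ∏ i ∈ Finset.Icc j n, L k i ω)

/-- Adaptive SR e-detectors (with scheduling function `K`, generalized inverse
`K⁻¹(k) = sInf {j | 1 ≤ j ∧ k ≤ K j}`, and adaptive re-weighting factors
`γ_j = (∑_{k=1}^{K j} w k)⁻¹`) are valid e-detectors. -/
theorem stmt16 {Ω : Type*} {m0 : MeasurableSpace Ω} (μ : Measure Ω) [IsProbabilityMeasure μ]
    (𝒢 : Filtration ℕ m0)
    (w : ℕ → ℝ≥0∞) (K : ℕ → ℕ) (hK : Monotone K)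
    (hw : ∀ j, 1 ≤ j → 0 < ∑ k ∈ Finset.Icc 1 (K j), w k ∧ ∑ k ∈ Finset.Icc 1 (K j), w k ≤ 1)
    (L : ℕ → ℕ → Ω → ℝ≥0∞)
    (hadapt : ∀ k n, Measurable[𝒢 n] (L k n))
    (hbase : ∀ k n, 1 ≤ n → ∀ A : Set Ω, MeasurableSet[𝒢 (n - 1)] A →
        ∫⁻ ω in A, L k n ω ∂μ ≤ μ A) :
    ∀ τ : Ω → ℕ∞, IsStoppingTimeENat 𝒢 τ →
      ∫⁻ ω, stoppedVal
        (fun n ω => ∑ k ∈ Finset.Icc 1 (K n), w k *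
          ∑ j ∈ Finset.Icc (sInf {j | 1 ≤ j ∧ k ≤ K j}) n,
            (∑ k' ∈ Finset.Icc 1 (K j), w k')⁻¹ * ∏ i ∈ Finset.Icc j n, L k i ω)
        τ ω ∂μ ≤ ∫⁻ ω, (τ ω : ℝ≥0∞) ∂μ := by
  intro τ hτ
  classical
  set M : ℕ → Ω → ℝ≥0∞ := fun n ω => ∑ k ∈ Finset.Icc 1 (K n), w k *
      ∑ j ∈ Finset.Icc (sInf {j | 1 ≤ j ∧ k ≤ K j}) n,
        (∑ k' ∈ Finset.Icc 1 (K j), w k')⁻¹ * ∏ i ∈ Finset.Icc j n, L k i ω with hM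
  set Z : ℕ → ℕ → Ω → ℝ≥0∞ := ZZ w K L with hZdef
  have hZ : ∀ j n ω, Z j n ω = ∑ k ∈ Finset.Icc 1 (K j), w k *
      ((∑ k' ∈ Finset.Icc 1 (K j), w k')⁻¹ * ∏ i ∈ Finset.Icc j n, L k i ω) :=
    fun j n ω => rfl
  have hL : ∀ k i, Measurable (L k i) := fun k i => (hadapt k i).mono (𝒢.le i) le_rfl
  have hZm : ∀ j n, Measurable (Z j n) := fun j n =>
    Finset.measurable_sum _ fun k _ => measurable_const.mul (measurable_const.mul
      (Finset.measurable_prod _ fun i _ => hL k i))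
  -- interchanging the two sums
  have hswap : ∀ n ω, M n ω = ∑ j ∈ Finset.Icc 1 n, Z j n ω := by
    intro n ω
    simp only [hM, hZ, Finset.mul_sum]
    refine Finset.sum_comm' ?_
    intro k j
    simp only [Finset.mem_Icc]
    constructor
    · rintro ⟨⟨hk1, hkn⟩, hinf, hjn⟩
      have hne : {j | 1 ≤ j ∧ k ≤ K j}.Nonempty :=
        ⟨max n 1, le_max_right _ _, hkn.trans (hK (le_max_left _ _))⟩
      have hmem := Nat.sInf_mem hne
      exact ⟨⟨hk1, hmem.2.trans (hK hinf)⟩, hmem.1.trans hinf, hjn⟩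
    · rintro ⟨⟨hk1, hkj⟩, hj1, hjn⟩
      exact ⟨⟨hk1, hkj.trans (hK hjn)⟩, Nat.sInf_le ⟨hj1, hkj⟩, hjn⟩
  have hMm : ∀ n, Measurable (M n) := fun n => by
    rw [show M n = fun ω => ∑ j ∈ Finset.Icc 1 n, Z j n ω from funext (hswap n)]
    exact Finset.measurable_sum _ fun j _ => hZm j n
  -- the per-epoch process starts at one
  have hZone : ∀ j, 1 ≤ j → ∀ n, n < j → ∀ ω, Z j n ω = 1 := by
    intro j hj n hn ω
    have hempty : Finset.Icc j n = ∅ := Finset.Icc_eq_empty (by omega)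
    rw [hZ]
    simp only [hempty, Finset.prod_empty, mul_one]
    rw [← Finset.sum_mul]
    exact ENNReal.mul_inv_cancel (hw j hj).1.ne'
      ((hw j hj).2.trans_lt ENNReal.one_lt_top).ne
  -- one-step supermartingale property
  have hstep : ∀ j N, j ≤ N + 1 → ∀ B : Set Ω, MeasurableSet[𝒢 N] B →
      ∫⁻ ω in B, Z j (N + 1) ω ∂μ ≤ ∫⁻ ω in B, Z j N ω ∂μ := by
    intro j N hjN B hB
    have hBm : MeasurableSet B := 𝒢.le N B hB
    have hterm : ∀ (k n : ℕ), Measurable fun ω =>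
        w k * ((∑ k' ∈ Finset.Icc 1 (K j), w k')⁻¹ * ∏ i ∈ Finset.Icc j n, L k i ω) :=
      fun k n => measurable_const.mul (measurable_const.mul
        (Finset.measurable_prod _ fun i _ => hL k i))
    simp only [hZ]
    rw [lintegral_finset_sum' _ fun k _ => (hterm k (N + 1)).aemeasurable,
        lintegral_finset_sum' _ fun k _ => (hterm k N).aemeasurable]
    refine Finset.sum_le_sum fun k _ => ?_
    set f : Ω → ℝ≥0∞ := B.indicator
      (fun ω => w k * ((∑ k' ∈ Finset.Icc 1 (K j), w k')⁻¹ *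
        ∏ i ∈ Finset.Icc j N, L k i ω)) with hf
    have hfm : Measurable[𝒢 N] f := Measurable.indicator
      (measurable_const.mul (measurable_const.mul (Finset.measurable_prod _ fun i hi =>
        (hadapt k i).mono (𝒢.mono (Finset.mem_Icc.mp hi).2) le_rfl))) hB
    have hkey := aux_keyMul (𝒢.le N) μ hfm (hL k (N + 1))
      (fun A hA => hbase k (N + 1) (Nat.le_add_left 1 N) A hA)
    calc ∫⁻ ω in B, w k * ((∑ k' ∈ Finset.Icc 1 (K j), w k')⁻¹ *
          ∏ i ∈ Finset.Icc j (N + 1), L k i ω) ∂μ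
        = ∫⁻ ω, f ω * L k (N + 1) ω ∂μ := by
          rw [← lintegral_indicator hBm]
          refine lintegral_congr fun ω => ?_
          by_cases hω : ω ∈ B
          · simp only [hf, Set.indicator_of_mem hω]
            rw [Finset.prod_Icc_succ_top hjN]
            ring
          · simp [hf, Set.indicator_of_notMem hω]
      _ ≤ ∫⁻ ω, f ω ∂μ := hkey
      _ = ∫⁻ ω in B, w k * ((∑ k' ∈ Finset.Icc 1 (K j), w k')⁻¹ *
          ∏ i ∈ Finset.Icc j N, L k i ω) ∂μ := by
          rw [hf, lintegral_indicator hBm]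
  -- measurability of level sets of τ
  have hτle : ∀ n : ℕ, MeasurableSet {ω | τ ω ≤ (n : ℕ∞)} := fun n => 𝒢.le n _ (hτ n)
  have hτeqm : ∀ n : ℕ, MeasurableSet {ω | τ ω = (n : ℕ∞)} := by
    intro n
    cases n with
    | zero =>
      have : {ω | τ ω = ((0 : ℕ) : ℕ∞)} = {ω | τ ω ≤ ((0 : ℕ) : ℕ∞)} := by
        ext ω; simp [le_zero_iff]
      rw [this]; exact hτle 0
    | succ n =>
      have : {ω | τ ω = ((n + 1 : ℕ) : ℕ∞)} =
          {ω | τ ω ≤ ((n + 1 : ℕ) : ℕ∞)} ∩ {ω | τ ω ≤ ((n : ℕ) : ℕ∞)}ᶜ := by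
        ext ω
        simp only [Set.mem_setOf_eq, Set.mem_inter_iff, Set.mem_compl_iff, not_le]
        constructor
        · intro h
          refine ⟨le_of_eq h, ?_⟩
          rw [h]; exact_mod_cast Nat.lt_succ_self n
        · rintro ⟨h1, h2⟩
          exact le_antisymm h1 ((enat_lt_iff_succ_le n _).mp h2)
      rw [this]; exact (hτle (n + 1)).inter (hτle n).compl
  have hltm : ∀ i : ℕ, MeasurableSet {ω | (i : ℕ∞) < τ ω} := by
    intro i
    have : {ω | (i : ℕ∞) < τ ω} = {ω | τ ω ≤ (i : ℕ∞)}ᶜ := by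
      ext ω; simp [not_le]
    rw [this]; exact (hτle i).compl
  -- the crucial per-epoch bound
  have hjbound : ∀ j : ℕ, 1 ≤ j →
      ∑' n : ℕ, (if j ≤ n then ∫⁻ ω in {ω | τ ω = (n : ℕ∞)}, Z j n ω ∂μ else 0)
        ≤ μ {ω | (j : ℕ∞) ≤ τ ω} := by
    intro j hj
    set b : ℕ → ℝ≥0∞ := fun n =>
      if j ≤ n then ∫⁻ ω in {ω | τ ω = (n : ℕ∞)}, Z j n ω ∂μ else 0 with hb
    set A : ℕ → Set Ω := fun N => {ω | (j : ℕ∞) ≤ τ ω ∧ (N : ℕ∞) < τ ω} with hA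
    have hAG : ∀ N, j - 1 ≤ N → MeasurableSet[𝒢 N] (A N) := by
      intro N hN
      have hAux : A N = {ω | τ ω ≤ ((j - 1 : ℕ) : ℕ∞)}ᶜ ∩ {ω | τ ω ≤ (N : ℕ∞)}ᶜ := by
        ext ω
        simp only [hA, Set.mem_setOf_eq, Set.mem_inter_iff, Set.mem_compl_iff, not_le]
        rw [enat_le_iff_pred_lt j hj]
      rw [hAux]
      exact (((𝒢.mono hN) _ (hτ (j - 1))).compl).inter (hτ N).compl
    have hbD : ∀ N, j - 1 ≤ N →
        ∑ n ∈ Finset.range (N + 1), b n + ∫⁻ ω in A N, Z j N ω ∂μ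
          ≤ μ {ω | (j : ℕ∞) ≤ τ ω} := by
      intro N hN
      induction N, hN using Nat.le_induction with
      | base =>
        have h1 : ∑ n ∈ Finset.range (j - 1 + 1), b n = 0 :=
          Finset.sum_eq_zero fun n hn => if_neg (by
            have := Finset.mem_range.mp hn; omega)
        have h2 : A (j - 1) = {ω | (j : ℕ∞) ≤ τ ω} := by
          ext ω
          simp only [hA, Set.mem_setOf_eq]
          rw [← enat_le_iff_pred_lt j hj]
          exact and_self_iff
        have h3 : ∫⁻ ω in A (j - 1), Z j (j - 1) ω ∂μ = μ (A (j - 1)) := by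
          rw [lintegral_congr (fun ω => hZone j hj (j - 1) (by omega) ω)]
          exact setLIntegral_one _
        rw [h1, zero_add, h3, h2]
      | succ N hN ih =>
        rw [Finset.sum_range_succ]
        have hbN1 : b (N + 1) = ∫⁻ ω in {ω | τ ω = ((N + 1 : ℕ) : ℕ∞)}, Z j (N + 1) ω ∂μ :=
          if_pos (by omega)
        have hAm : MeasurableSet (A (N + 1)) := 𝒢.le (N + 1) _ (hAG (N + 1) (by omega))
        have hdisj : Disjoint {ω | τ ω = ((N + 1 : ℕ) : ℕ∞)} (A (N + 1)) := by
          rw [Set.disjoint_left]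
          intro ω hω hω2
          have h2 : ((N + 1 : ℕ) : ℕ∞) < τ ω := hω2.2
          rw [hω] at h2
          exact lt_irrefl _ h2
        have hunion : {ω | τ ω = ((N + 1 : ℕ) : ℕ∞)} ∪ A (N + 1) = A N := by
          ext ω
          simp only [hA, Set.mem_union, Set.mem_setOf_eq]
          constructor
          · rintro (h | ⟨h1, h2⟩)
            · constructor
              · rw [h]; exact_mod_cast (by omega : j ≤ N + 1)
              · rw [h]; exact_mod_cast (by omega : N < N + 1)
            · exact ⟨h1, lt_trans (by exact_mod_cast Nat.lt_succ_self N) h2⟩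
          · rintro ⟨h1, h2⟩
            have h3 : ((N + 1 : ℕ) : ℕ∞) ≤ τ ω := (enat_lt_iff_succ_le N _).mp h2
            rcases eq_or_lt_of_le h3 with h4 | h4
            · exact Or.inl h4.symm
            · exact Or.inr ⟨h1, h4⟩
        calc ∑ n ∈ Finset.range (N + 1), b n + b (N + 1) + ∫⁻ ω in A (N + 1), Z j (N + 1) ω ∂μ
            = ∑ n ∈ Finset.range (N + 1), b n +
              (∫⁻ ω in {ω | τ ω = ((N + 1 : ℕ) : ℕ∞)}, Z j (N + 1) ω ∂μ +
                ∫⁻ ω in A (N + 1), Z j (N + 1) ω ∂μ) := by rw [hbN1, add_assoc]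
          _ = ∑ n ∈ Finset.range (N + 1), b n + ∫⁻ ω in A N, Z j (N + 1) ω ∂μ := by
              rw [← lintegral_union hAm hdisj, hunion]
          _ ≤ ∑ n ∈ Finset.range (N + 1), b n + ∫⁻ ω in A N, Z j N ω ∂μ :=
              add_le_add_right (hstep j N (by omega) (A N) (hAG N hN)) _
          _ ≤ μ {ω | (j : ℕ∞) ≤ τ ω} := ih
    have hsum : ∀ N : ℕ, ∑ n ∈ Finset.range N, b n ≤ μ {ω | (j : ℕ∞) ≤ τ ω} := by
      intro N
      rcases le_or_gt N j with hNj | hNj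
      · rw [Finset.sum_eq_zero fun n hn => if_neg (by
          have := Finset.mem_range.mp hn; omega)]
        exact bot_le
      · have h1 : j - 1 ≤ N - 1 := by omega
        have h2 := hbD (N - 1) h1
        rw [show N - 1 + 1 = N by omega] at h2
        exact le_trans (self_le_add_right _ _) h2
    calc ∑' n, b n = ⨆ N, ∑ n ∈ Finset.range N, b n := ENNReal.tsum_eq_iSup_nat
      _ ≤ μ {ω | (j : ℕ∞) ≤ τ ω} := iSup_le hsum
  -- expectation of τ as a sum of tail probabilities
  have hτint : ∫⁻ ω, (τ ω : ℝ≥0∞) ∂μ = ∑' i : ℕ, μ {ω | (i : ℕ∞) < τ ω} := by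
    have hpt : ∀ ω, (τ ω : ℝ≥0∞) =
        ∑' i : ℕ, Set.indicator {ω' | (i : ℕ∞) < τ ω'} (fun _ => 1) ω := by
      intro ω
      rw [enat_coe_tsum (τ ω)]
      refine tsum_congr fun i => ?_
      by_cases h : (i : ℕ∞) < τ ω
      · rw [if_pos h]
        exact (Set.indicator_of_mem (show ω ∈ {ω' | (i : ℕ∞) < τ ω'} from h) (fun _ => (1 : ℝ≥0∞))).symm
      · rw [if_neg h]
        exact (Set.indicator_of_notMem (show ω ∉ {ω' | (i : ℕ∞) < τ ω'} from h) (fun _ => (1 : ℝ≥0∞))).symm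
    rw [lintegral_congr hpt,
      lintegral_tsum fun i => ((measurable_const.indicator (hltm i)).aemeasurable)]
    refine tsum_congr fun i => ?_
    rw [lintegral_indicator (hltm i), setLIntegral_one]
  by_cases htop : μ {ω | τ ω = ⊤} = 0
  · -- main case: τ is a.e. finite
    have hae : ∀ᵐ ω ∂μ, τ ω ≠ ⊤ := by
      rw [ae_iff]
      simpa using htop
    have h1 : ∫⁻ ω, stoppedVal M τ ω ∂μ
        = ∫⁻ ω, ∑' n : ℕ, Set.indicator {ω' | τ ω' = (n : ℕ∞)} (M n) ω ∂μ := by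
      refine lintegral_congr_ae ?_
      filter_upwards [hae] with ω hω
      rw [stoppedVal, if_neg hω]
      have hτω : τ ω = ((τ ω).toNat : ℕ∞) := (ENat.coe_toNat hω).symm
      rw [tsum_eq_single (τ ω).toNat ?_]
      · exact (Set.indicator_of_mem (show ω ∈ {ω' | τ ω' = ((τ ω).toNat : ℕ∞)} from hτω)
          (M (τ ω).toNat)).symm
      · intro n hn
        refine Set.indicator_of_notMem (fun hmem => hn ?_) _
        have hmem' : τ ω = (n : ℕ∞) := hmem
        rw [hmem']
        simp
    rw [h1, lintegral_tsum fun n => ((hMm n).indicator (hτeqm n)).aemeasurable]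
    have h2 : ∀ n : ℕ, ∫⁻ ω, Set.indicator {ω' | τ ω' = (n : ℕ∞)} (M n) ω ∂μ
        = ∑ j ∈ Finset.Icc 1 n, ∫⁻ ω in {ω' | τ ω' = (n : ℕ∞)}, Z j n ω ∂μ := by
      intro n
      rw [lintegral_indicator (hτeqm n),
        show (M n) = fun ω => ∑ j ∈ Finset.Icc 1 n, Z j n ω from funext (hswap n),
        lintegral_finset_sum' _ fun j _ => (hZm j n).aemeasurable]
    calc ∑' n : ℕ, ∫⁻ ω, Set.indicator {ω' | τ ω' = (n : ℕ∞)} (M n) ω ∂μ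
        = ∑' n : ℕ, ∑ j ∈ Finset.Icc 1 n,
            ∫⁻ ω in {ω' | τ ω' = (n : ℕ∞)}, Z j n ω ∂μ := tsum_congr h2
      _ = ∑' n : ℕ, ∑' j : ℕ, (if 1 ≤ j ∧ j ≤ n then
            ∫⁻ ω in {ω' | τ ω' = (n : ℕ∞)}, Z j n ω ∂μ else 0) := by
          refine tsum_congr fun n => ?_
          rw [tsum_eq_sum (s := Finset.Icc 1 n)
            (fun j hj => if_neg (fun h => hj (Finset.mem_Icc.mpr h)))]
          exact (Finset.sum_congr rfl fun j hj => (if_pos (Finset.mem_Icc.mp hj))).symm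
      _ = ∑' j : ℕ, ∑' n : ℕ, (if 1 ≤ j ∧ j ≤ n then
            ∫⁻ ω in {ω' | τ ω' = (n : ℕ∞)}, Z j n ω ∂μ else 0) := ENNReal.tsum_comm
      _ ≤ ∑' j : ℕ, (if 1 ≤ j then μ {ω | (j : ℕ∞) ≤ τ ω} else 0) := by
          refine ENNReal.tsum_le_tsum fun j => ?_
          by_cases hj : 1 ≤ j
          · rw [if_pos hj]
            refine le_trans (le_of_eq (tsum_congr fun n => ?_)) (hjbound j hj)
            by_cases hn : j ≤ n
            · rw [if_pos ⟨hj, hn⟩, if_pos hn]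
            · rw [if_neg (fun h => hn h.2), if_neg hn]
          · rw [if_neg hj]
            have : ∀ n : ℕ, (if 1 ≤ j ∧ j ≤ n then
                ∫⁻ ω in {ω' | τ ω' = (n : ℕ∞)}, Z j n ω ∂μ else 0) = 0 :=
              fun n => if_neg (fun h => hj h.1)
            rw [tsum_congr this, tsum_zero]
      _ = ∑' i : ℕ, μ {ω | ((i + 1 : ℕ) : ℕ∞) ≤ τ ω} := by
          rw [tsum_eq_zero_add' ENNReal.summable]
          rw [if_neg (by omega), zero_add]
          exact tsum_congr fun i => if_pos (by omega)
      _ = ∑' i : ℕ, μ {ω | (i : ℕ∞) < τ ω} := by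
          refine tsum_congr fun i => ?_
          congr 1
          ext ω
          simp only [Set.mem_setOf_eq]
          exact (enat_lt_iff_succ_le i _).symm
      _ = ∫⁻ ω, (τ ω : ℝ≥0∞) ∂μ := hτint.symm
  · -- degenerate case: τ = ∞ with positive probability, so the right side is infinite
    have hmeas_top : MeasurableSet {ω | τ ω = ⊤} := by
      have : {ω | τ ω = ⊤} = ⋂ n : ℕ, {ω | τ ω ≤ (n : ℕ∞)}ᶜ := by
        ext ω
        simp only [Set.mem_iInter, Set.mem_compl_iff, Set.mem_setOf_eq, not_le]
        constructor
        · intro h n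
          rw [h]
          exact lt_top_iff_ne_top.mpr (by simp)
        · intro h
          by_contra hne
          have h2 := h (τ ω).toNat
          rw [ENat.coe_toNat hne] at h2
          exact lt_irrefl _ h2
      rw [this]
      exact MeasurableSet.iInter fun n => (hτle n).compl
    have hrhs : ∫⁻ ω, (τ ω : ℝ≥0∞) ∂μ = ⊤ := by
      refine eq_top_iff.mpr ?_
      calc (⊤ : ℝ≥0∞) = ⊤ * μ {ω | τ ω = ⊤} := by rw [ENNReal.top_mul htop]
        _ = ∫⁻ _ω in {ω | τ ω = ⊤}, ⊤ ∂μ := (setLIntegral_const _ _).symm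
        _ = ∫⁻ ω in {ω | τ ω = ⊤}, (τ ω : ℝ≥0∞) ∂μ :=
            (setLIntegral_congr_fun hmeas_top (fun ω hω => by
              rw [show τ ω = ⊤ from hω]; simp)).symm
        _ ≤ ∫⁻ ω, (τ ω : ℝ≥0∞) ∂μ := setLIntegral_le_lintegral _ _
    rw [hrhs]
    exact le_top
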